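/- arXiv:2307.13820 — 3 statements merged into one kernel-verified Lean document; each statement's English description precedes it below -/
import Mathlib

section
/- Let φ be an orthonormal p-frame and define, for any p-frame y, P_φ(y) = y − φ·sym⟨⟨φ,y⟩⟩ and P_φ^⊥(y) = φ·sym⟨⟨φ,y⟩⟩. Then: (i) P_φ(y) ∈ T_φ; (ii) (P_φ^⊥(y), η)_H = 0 for every η ∈ T_φ; (iii) y = P_φ(y) + P_φ^⊥(y); (iv) P_φ(P_φ(y)) = P_φ(y); and (v) P_φ(φ·S) = 0 for every symmetric real p×p matrix S. -/
open Matrix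

noncomputable section

/-- The outer product of two `p`-frames: `⟨⟨v,w⟩⟩ᵢⱼ = ⟪vᵢ, wⱼ⟫`. -/
def frameOuter {H : Type*} [NormedAddCommGroup H] [InnerProductSpace ℝ H] {p : ℕ}
    (v w : Fin p → H) : Matrix (Fin p) (Fin p) ℝ :=
  fun i j => (inner ℝ (v i) (w j) : ℝ)

/-- The action of a real `p × p` matrix on a `p`-frame: `(v·A)ⱼ = ∑ᵢ Aᵢⱼ • vᵢ`. -/
def frameAct {H : Type*} [NormedAddCommGroup H] [InnerProductSpace ℝ H] {p : ℕ}
    (v : Fin p → H) (A : Matrix (Fin p) (Fin p) ℝ) : Fin p → H :=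
  fun j => ∑ i, A i j • v i

/-- The `L²`-type inner product of two `p`-frames: `(v,w)_H = ∑ⱼ ⟪vⱼ, wⱼ⟫`. -/
def frameInner {H : Type*} [NormedAddCommGroup H] [InnerProductSpace ℝ H] {p : ℕ}
    (v w : Fin p → H) : ℝ :=
  ∑ j, (inner ℝ (v j) (w j) : ℝ)

/-- The symmetric part of a square matrix: `sym M = (M + Mᵀ)/2`. -/
def symPart {p : ℕ} (M : Matrix (Fin p) (Fin p) ℝ) : Matrix (Fin p) (Fin p) ℝ :=
  (1 / 2 : ℝ) • (M + Mᵀ)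

/-- The orthogonal projection onto the tangent space: `P_φ(y) = y − φ·sym⟨⟨φ,y⟩⟩`. -/
def tangentProj {H : Type*} [NormedAddCommGroup H] [InnerProductSpace ℝ H] {p : ℕ}
    (φ y : Fin p → H) : Fin p → H :=
  y - frameAct φ (symPart (frameOuter φ y))

/-- The orthogonal projection onto the normal space: `P_φ^⊥(y) = φ·sym⟨⟨φ,y⟩⟩`. -/
def normalProj {H : Type*} [NormedAddCommGroup H] [InnerProductSpace ℝ H] {p : ℕ}
    (φ y : Fin p → H) : Fin p → H :=
  frameAct φ (symPart (frameOuter φ y))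

section Aux
variable {H : Type*} [NormedAddCommGroup H] [InnerProductSpace ℝ H] {p : ℕ}

lemma frameOuter_comm (v w : Fin p → H) : frameOuter v w = (frameOuter w v)ᵀ := by
  ext i j; simp [frameOuter, Matrix.transpose_apply, real_inner_comm]

lemma outer_act_right {φ : Fin p → H} (hφ : frameOuter φ φ = 1)
    (A : Matrix (Fin p) (Fin p) ℝ) : frameOuter φ (frameAct φ A) = A := by
  ext i j
  have h1 : ∀ k, (inner ℝ (φ i) (φ k) : ℝ) = if i = k then 1 else 0 := by
    intro k
    have := congrFun (congrFun hφ i) k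
    simpa [frameOuter, Matrix.one_apply] using this
  simp only [frameOuter, frameAct, inner_sum, real_inner_smul_right, h1]
  simp [mul_ite, Finset.sum_ite_eq]

lemma outer_act_left {φ : Fin p → H} (hφ : frameOuter φ φ = 1)
    (A : Matrix (Fin p) (Fin p) ℝ) : frameOuter (frameAct φ A) φ = Aᵀ := by
  rw [frameOuter_comm, outer_act_right hφ]

lemma outer_sub_left (u v w : Fin p → H) :
    frameOuter (u - v) w = frameOuter u w - frameOuter v w := by
  ext i j; simp [frameOuter, inner_sub_left]

lemma outer_sub_right (u v w : Fin p → H) :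
    frameOuter u (v - w) = frameOuter u v - frameOuter u w := by
  ext i j; simp [frameOuter, inner_sub_right]

lemma symPart_transpose {M : Matrix (Fin p) (Fin p) ℝ} : (symPart M)ᵀ = symPart M := by
  simp [symPart, Matrix.transpose_add, add_comm]

lemma act_zero (φ : Fin p → H) : frameAct φ (0 : Matrix (Fin p) (Fin p) ℝ) = 0 := by
  funext j; simp [frameAct]

end Aux

/-- Properties of the orthogonal projections onto the tangent and normal
spaces of the Stiefel manifold at an orthonormal frame `φ`. -/
theorem tangent_normal_proj_properties {H : Type*} [NormedAddCommGroup H]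
    [InnerProductSpace ℝ H] {p : ℕ} (hp : 1 ≤ p) (φ y : Fin p → H)
    (hφ : frameOuter φ φ = 1) :
    (frameOuter (tangentProj φ y) φ + frameOuter φ (tangentProj φ y) = 0) ∧
    (∀ η : Fin p → H, frameOuter η φ + frameOuter φ η = 0 →
      frameInner (normalProj φ y) η = 0) ∧
    y = tangentProj φ y + normalProj φ y ∧
    tangentProj φ (tangentProj φ y) = tangentProj φ y ∧
    (∀ S : Matrix (Fin p) (Fin p) ℝ, Sᵀ = S → tangentProj φ (frameAct φ S) = 0) := by
  set M := frameOuter φ y with hM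
  have hMT : frameOuter y φ = Mᵀ := by rw [hM, frameOuter_comm]
  have houter_tangent : frameOuter φ (tangentProj φ y) = M - symPart M := by
    rw [tangentProj, outer_sub_right, outer_act_right hφ, hM]
  have houter_tangent' : frameOuter (tangentProj φ y) φ = Mᵀ - symPart M := by
    rw [tangentProj, outer_sub_left, outer_act_left hφ, symPart_transpose, hMT]
  refine ⟨?_, ?_, ?_, ?_, ?_⟩
  · rw [houter_tangent, houter_tangent']
    ext i j
    simp [symPart, Matrix.add_apply, Matrix.sub_apply, Matrix.smul_apply,
      Matrix.transpose_apply]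
    ring
  · intro η hη
    set N := frameOuter φ η with hN
    have hanti : ∀ i j, N j i = - N i j := by
      intro i j
      have := congrFun (congrFun hη j) i
      have h2 : frameOuter η φ = Nᵀ := by rw [hN, frameOuter_comm]
      rw [h2] at this
      simpa [Matrix.add_apply, Matrix.transpose_apply, eq_neg_iff_add_eq_zero,
        add_comm] using this
    set S := symPart M with hS
    have hsym : ∀ i j, S j i = S i j := by
      intro i j
      simp [hS, symPart, Matrix.add_apply, Matrix.transpose_apply, add_comm]
    have key : frameInner (normalProj φ y) η = ∑ j, ∑ i, S i j * N i j := by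
      simp [frameInner, normalProj, frameAct, sum_inner, real_inner_smul_left,
        hN, frameOuter, ← hS]
      rfl
    rw [key]
    have h3 : (∑ j, ∑ i, S i j * N i j) = -(∑ j, ∑ i, S i j * N i j) := by
      calc (∑ j, ∑ i, S i j * N i j) = ∑ i, ∑ j, S j i * N j i := rfl
        _ = ∑ i, ∑ j, -(S i j * N i j) := by
            refine Finset.sum_congr rfl fun i _ => Finset.sum_congr rfl fun j _ => ?_
            rw [hsym i j, hanti i j]; ring
        _ = -(∑ i, ∑ j, S i j * N i j) := by simp
        _ = -(∑ j, ∑ i, S i j * N i j) := by rw [Finset.sum_comm]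
    linarith
  · funext j; simp [tangentProj, normalProj]
  · have h0 : symPart (frameOuter φ (tangentProj φ y)) = 0 := by
      rw [houter_tangent]
      ext i j
      simp [symPart, Matrix.add_apply, Matrix.sub_apply, Matrix.smul_apply,
        Matrix.transpose_apply]
      ring
    rw [tangentProj, h0, act_zero, sub_zero]
  · intro S hSsym
    have h1 : symPart (frameOuter φ (frameAct φ S)) = S := by
      rw [outer_act_right hφ]
      ext i j
      have := congrFun (congrFun hSsym i) j
      simp only [Matrix.transpose_apply] at this
      simp [symPart, Matrix.add_apply, Matrix.smul_apply, Matrix.transpose_apply, this]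
      ring
    rw [tangentProj, h1, sub_self]
end
end

section
/- Let φ be an orthonormal p-frame and η ∈ T_φ a tangent vector. Then ⟨⟨φ+η, φ+η⟩⟩ = Iₚ + ⟨⟨η,η⟩⟩, this matrix is symmetric positive definite, and the polar retraction u = (φ+η)·(Iₚ + ⟨⟨η,η⟩⟩)^{−1/2}, where (Iₚ + ⟨⟨η,η⟩⟩)^{−1/2} is the inverse of the positive-definite square root of Iₚ + ⟨⟨η,η⟩⟩, is again an orthonormal p-frame: ⟨⟨u,u⟩⟩ = Iₚ. -/
open Matrix

noncomputable section

lemma frameOuter_act {H : Type*} [NormedAddCommGroup H] [InnerProductSpace ℝ H] {p : ℕ}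
    (v w : Fin p → H) (A B : Matrix (Fin p) (Fin p) ℝ) :
    frameOuter (frameAct v A) (frameAct w B) = Aᵀ * frameOuter v w * B := by
  ext i j
  simp only [frameOuter, frameAct, Matrix.mul_apply, Matrix.transpose_apply,
    sum_inner, inner_sum, real_inner_smul_left, real_inner_smul_right,
    Finset.sum_mul, Finset.mul_sum]
  exact Finset.sum_congr rfl fun k _ => Finset.sum_congr rfl fun l _ => by ring

lemma frameOuter_gram_posSemidef {H : Type*} [NormedAddCommGroup H] [InnerProductSpace ℝ H]
    {p : ℕ} (η : Fin p → H) : (frameOuter η η).PosSemidef := by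
  rw [Matrix.posSemidef_iff_dotProduct_mulVec]
  constructor
  · ext i j
    simp [frameOuter, Matrix.IsHermitian, real_inner_comm]
  · intro x
    have : dotProduct (star x) (frameOuter η η *ᵥ x)
        = (inner ℝ (∑ i, x i • η i) (∑ j, x j • η j) : ℝ) := by
      simp only [dotProduct, mulVec, dotProduct, frameOuter, sum_inner, inner_sum,
        real_inner_smul_left, real_inner_smul_right, Finset.mul_sum, Pi.star_apply, star_trivial]
      exact Finset.sum_congr rfl fun k _ => Finset.sum_congr rfl fun l _ => by
        rw [real_inner_comm]; ring
    rw [this]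
    exact real_inner_self_nonneg

/-- For an orthonormal frame `φ` and a tangent vector `η`, one has
`⟨⟨φ+η, φ+η⟩⟩ = I + ⟨⟨η,η⟩⟩`, this matrix is symmetric positive definite, and the polar
retraction `(φ+η)·(I + ⟨⟨η,η⟩⟩)^{-1/2}` is again an orthonormal frame (where the inverse
square root is the inverse of the positive definite square root). -/
theorem polar_retraction_orthonormal {H : Type*} [NormedAddCommGroup H]
    [InnerProductSpace ℝ H] {p : ℕ} (hp : 1 ≤ p) (φ η : Fin p → H)
    (hφ : frameOuter φ φ = 1) (hη : frameOuter η φ + frameOuter φ η = 0) :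
    frameOuter (φ + η) (φ + η) = 1 + frameOuter η η ∧
    (1 + frameOuter η η).PosDef ∧
    ∀ S : Matrix (Fin p) (Fin p) ℝ, S.PosDef → S * S = 1 + frameOuter η η →
      frameOuter (frameAct (φ + η) S⁻¹) (frameAct (φ + η) S⁻¹) = 1 := by
  have h1 : frameOuter (φ + η) (φ + η) = 1 + frameOuter η η := by
    have : frameOuter (φ + η) (φ + η)
        = frameOuter φ φ + (frameOuter η φ + frameOuter φ η) + frameOuter η η := by
      ext i j
      simp [frameOuter, inner_add_left, inner_add_right, Matrix.add_apply]
      ring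
    rw [this, hφ, hη, add_zero]
  have h2 : (1 + frameOuter η η).PosDef :=
    Matrix.PosDef.add_posSemidef Matrix.PosDef.one (frameOuter_gram_posSemidef η)
  refine ⟨h1, h2, fun S hS hSS => ?_⟩
  have hSherm : Sᵀ = S := by
    have := hS.isHermitian
    rwa [Matrix.IsHermitian, Matrix.conjTranspose_eq_transpose_of_trivial] at this
  have hinv : IsUnit S.det := hS.det_pos.ne'.isUnit
  rw [frameOuter_act, h1, ← hSS, Matrix.transpose_nonsing_inv, hSherm]
  rw [← Matrix.mul_assoc, Matrix.nonsing_inv_mul _ hinv, Matrix.one_mul,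
    Matrix.mul_nonsing_inv _ hinv]
end
end

section
/- Let H be a real Hilbert space with a Hilbert basis (eₙ)ₙ∈ℕ, and let T : H → H be a bounded self-adjoint operator with T eₙ = λₙ eₙ for all n, where λ : ℕ → ℝ is monotone nondecreasing with a spectral gap λ_{p−1} < λ_p. Let ψ : Fin p → H be a p-tuple of vectors with ⟪eₙ, ψⱼ⟫ = 0 for all n < p and all j, and suppose ψ is not identically zero. Then ∑_{j<p} (⟪T ψⱼ, ψⱼ⟫ − λⱼ ‖ψⱼ‖²) ≥ ∑_{j<p} (λ_p − λⱼ) ‖ψⱼ‖² > 0. (This is the positivity of the Riemannian Hessian of the reduced energy on the Grassmann manifold at a ground state, expressed on horizontal lifts whose components are orthogonal to the first p eigenfunctions.) -/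
open scoped BigOperators

lemma key_lower {H : Type*} [NormedAddCommGroup H] [InnerProductSpace ℝ H]
    [CompleteSpace H] (e : HilbertBasis ℕ ℝ H) (T : H →L[ℝ] H)
    (hT : ∀ x y : H, (inner ℝ (T x) y : ℝ) = (inner ℝ x (T y) : ℝ))
    (lam : ℕ → ℝ) (hlam : Monotone lam) (heig : ∀ n : ℕ, T (e n) = lam n • e n)
    (p : ℕ) (x : H) (hx : ∀ n < p, (inner ℝ (e n) x : ℝ) = 0) :
    lam p * ‖x‖ ^ 2 ≤ (inner ℝ (T x) x : ℝ) := by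
  have hcoef : ∀ n : ℕ, (inner ℝ (e n) (T x) : ℝ) = lam n * (inner ℝ (e n) x : ℝ) := by
    intro n
    rw [← hT (e n) x, heig n, inner_smul_left]
    simp
  have h1 : HasSum (fun n => lam n * (inner ℝ (e n) x : ℝ) ^ 2) (inner ℝ x (T x) : ℝ) := by
    have := e.hasSum_inner_mul_inner x (T x)
    convert this using 2 with n
    case e'_3 => rfl
    rw [hcoef n, real_inner_comm x (e n)]
    ring
  have h2 : HasSum (fun n => ((inner ℝ (e n) x : ℝ)) ^ 2) (‖x‖ ^ 2) := by
    have := e.hasSum_inner_mul_inner x x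
    rw [real_inner_self_eq_norm_sq] at this
    convert this using 2 with n
    case e'_3 => rfl
    rw [real_inner_comm x (e n)]
    ring
  have h3 : HasSum (fun n => lam p * ((inner ℝ (e n) x : ℝ)) ^ 2) (lam p * ‖x‖ ^ 2) :=
    h2.mul_left (lam p)
  have hle : lam p * ‖x‖ ^ 2 ≤ (inner ℝ x (T x) : ℝ) := by
    refine hasSum_le (fun n => ?_) h3 h1
    by_cases hn : n < p
    · rw [hx n hn]; simp
    · have : lam p ≤ lam n := hlam (le_of_not_gt hn)
      nlinarith [sq_nonneg ((inner ℝ (e n) x : ℝ))]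
  linarith [hT x x, hle]

/-- Positivity of the Riemannian Hessian on horizontal lifts: with a
spectral gap `λ_{p-1} < λ_p`, a nonzero `p`-tuple `ψ` whose components are orthogonal to
the first `p` eigenfunctions satisfies
`∑ⱼ (⟪T ψⱼ, ψⱼ⟫ − λⱼ ‖ψⱼ‖²) ≥ ∑ⱼ (λ_p − λⱼ) ‖ψⱼ‖² > 0`. -/
theorem hessian_positive {H : Type*} [NormedAddCommGroup H] [InnerProductSpace ℝ H]
    [CompleteSpace H] (e : HilbertBasis ℕ ℝ H) (T : H →L[ℝ] H)
    (hT : ∀ x y : H, (inner ℝ (T x) y : ℝ) = (inner ℝ x (T y) : ℝ))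
    (lam : ℕ → ℝ) (hlam : Monotone lam) (heig : ∀ n : ℕ, T (e n) = lam n • e n)
    (p : ℕ) (hp : 1 ≤ p) (hgap : lam (p - 1) < lam p)
    (ψ : Fin p → H) (hψ : ∀ n < p, ∀ j : Fin p, (inner ℝ (e n) (ψ j) : ℝ) = 0)
    (hne : ψ ≠ 0) :
    (∑ j : Fin p, ((inner ℝ (T (ψ j)) (ψ j) : ℝ) - lam j * ‖ψ j‖ ^ 2) ≥
      ∑ j : Fin p, (lam p - lam j) * ‖ψ j‖ ^ 2) ∧
    0 < ∑ j : Fin p, (lam p - lam j) * ‖ψ j‖ ^ 2 := by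
  have hkey : ∀ j : Fin p, lam p * ‖ψ j‖ ^ 2 ≤ (inner ℝ (T (ψ j)) (ψ j) : ℝ) := fun j =>
    key_lower e T hT lam hlam heig p (ψ j) (fun n hn => hψ n hn j)
  have hjlt : ∀ j : Fin p, lam (j : ℕ) < lam p := fun j =>
    lt_of_le_of_lt (hlam (by omega : (j : ℕ) ≤ p - 1)) hgap
  constructor
  · refine Finset.sum_le_sum fun j _ => ?_
    have := hkey j
    nlinarith [sq_nonneg ‖ψ j‖]
  · obtain ⟨j, hj⟩ : ∃ j, ψ j ≠ 0 := by
      by_contra h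
      push_neg at h
      exact hne (funext fun j => h j)
    refine Finset.sum_pos' (fun i _ => ?_) ⟨j, Finset.mem_univ j, ?_⟩
    · have := (hjlt i).le
      nlinarith [sq_nonneg ‖ψ i‖]
    · have h1 : 0 < ‖ψ j‖ ^ 2 := by have := norm_pos_iff.mpr hj; positivity
      nlinarith [hjlt j]
end
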